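/- Let C be an (m+n)×(m+n) complex matrix with 1 + C invertible, let D be the lower-right n×n corner of C(1+C)⁻¹ with det(1 − D) ≠ 0, and set E = D(1−D)⁻¹. Then det(1 + E) = det(1 + C) / (∑_{X ⊆ {1,…,m}} det C[X,X]). -/

import Mathlib

open Matrix

lemma widom_det_piecewise_one {k : Type*} [Fintype k] [DecidableEq k]
    (N : Matrix k k ℂ) (s : Finset k) :
    (Matrix.of (s.piecewise (fun i => N i) (fun i => (1 : Matrix k k ℂ) i))).det
      = (N.submatrix (fun i : {x // x ∈ s} => (i : k)) (fun j : {x // x ∈ s} => (j : k))).det := by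
  classical
  set P := Matrix.of (s.piecewise (fun i => N i) (fun i => (1 : Matrix k k ℂ) i)) with hP
  let e : {x // x ∈ s} ⊕ {x // x ∉ s} ≃ k := Equiv.sumCompl (· ∈ s)
  have hsub : P.submatrix e e =
      fromBlocks (N.submatrix (fun i : {x // x ∈ s} => (i : k)) (fun j : {x // x ∈ s} => (j : k)))
        (N.submatrix (fun i : {x // x ∈ s} => (i : k)) (fun j : {x // x ∉ s} => (j : k)))
        0 1 := by
    ext i j
    cases i with
    | inl i =>
      cases j with
      | inl j => simp [P, e, Finset.piecewise, i.2]
      | inr j => simp [P, e, Finset.piecewise, i.2]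
    | inr i =>
      cases j with
      | inl j =>
        have : (i : k) ≠ (j : k) := fun hij => i.2 (hij ▸ j.2)
        simp [P, e, Finset.piecewise, i.2, one_apply, this]
      | inr j =>
        have : ((i : k) = (j : k)) ↔ i = j := Subtype.coe_injective.eq_iff
        simp [P, e, Finset.piecewise, i.2, one_apply, this]
  rw [← det_submatrix_equiv_self e P, hsub, det_fromBlocks_zero₂₁, det_one, mul_one]

lemma widom_det_one_add_eq_sum_minors {k : Type*} [Fintype k] [DecidableEq k]
    (N : Matrix k k ℂ) :
    (1 + N).det = ∑ X : Finset k,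
      (N.submatrix (fun i : {x // x ∈ X} => (i : k)) (fun j : {x // x ∈ X} => (j : k))).det := by
  classical
  have h1 : (1 + N).det = (N + 1).det := by rw [add_comm]
  rw [h1]
  have h0 : (N + 1).det =
      (Matrix.detRowAlternating : (k → ℂ) [⋀^k]→ₗ[ℂ] ℂ)
        ((fun i => N i) + (fun i => (1 : Matrix k k ℂ) i)) := rfl
  rw [h0]
  have h2 := (Matrix.detRowAlternating : (k → ℂ) [⋀^k]→ₗ[ℂ] ℂ).toMultilinearMap.map_add_univ
      (fun i => N i) (fun i => (1 : Matrix k k ℂ) i)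
  refine h2.trans (Finset.sum_congr rfl fun s _ => ?_)
  exact widom_det_piecewise_one N s

theorem widom_stmt5 {m n : ℕ} (C : Matrix (Fin (m + n)) (Fin (m + n)) ℂ)
    (h : IsUnit (1 + C))
    (D : Matrix (Fin n) (Fin n) ℂ)
    (hD : D = (C * (1 + C)⁻¹).submatrix (Fin.natAdd m) (Fin.natAdd m))
    (hDdet : (1 - D).det ≠ 0)
    (E : Matrix (Fin n) (Fin n) ℂ)
    (hE : E = D * (1 - D)⁻¹) :
    (1 + E).det =
      (1 + C).det /
        (∑ X : Finset (Fin m),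
          (C.submatrix (fun i : {x // x ∈ X} => Fin.castAdd n i.1)
            (fun j : {x // x ∈ X} => Fin.castAdd n j.1)).det) := by
  classical
  set A := 1 + C with hA
  have hdetA : IsUnit A.det := (isUnit_iff_isUnit_det A).mp h
  have hdetA0 : A.det ≠ 0 := hdetA.ne_zero
  have hAM : A * A⁻¹ = 1 := mul_nonsing_inv A hdetA
  have hMA : A⁻¹ * A = 1 := nonsing_inv_mul A hdetA
  set M := A⁻¹ with hM
  -- Step A : 1 - D = lower-right corner of A⁻¹
  have hCM : C * M = 1 - M := by
    have hC : C = A - 1 := by rw [hA]; abel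
    rw [hC, Matrix.sub_mul, Matrix.one_mul, hAM]
  have hnatinj : Function.Injective (Fin.natAdd m : Fin n → Fin (m + n)) := by
    intro i j hij
    have := congrArg Fin.val hij
    simp only [Fin.coe_natAdd] at this
    exact Fin.ext (by omega)
  have h1D : 1 - D = M.submatrix (Fin.natAdd m) (Fin.natAdd m) := by
    rw [hD, hCM]
    ext i j
    simp [one_apply, hnatinj.eq_iff]
  -- Step B : det (1 + E) = (det (1 - D))⁻¹
  have hDunit : IsUnit (1 - D).det := isUnit_iff_ne_zero.mpr hDdet
  have h1E : 1 + E = (1 - D)⁻¹ := by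
    rw [hE]
    calc 1 + D * (1 - D)⁻¹
        = (1 - D) * (1 - D)⁻¹ + D * (1 - D)⁻¹ := by rw [mul_nonsing_inv _ hDunit]
      _ = ((1 - D) + D) * (1 - D)⁻¹ := by rw [Matrix.add_mul]
      _ = (1 - D)⁻¹ := by rw [sub_add_cancel, Matrix.one_mul]
  have hLHS : (1 + E).det = ((1 - D).det)⁻¹ := by
    rw [h1E, det_nonsing_inv, Ring.inverse_eq_inv']
  -- Step C : Jacobi identity for the corner
  set e : Fin m ⊕ Fin n ≃ Fin (m + n) := finSumFinEquiv with he
  set A' := A.submatrix e e with hA'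
  set M' := M.submatrix e e with hM'
  have hA'M' : A' * M' = 1 := by
    rw [hA', hM', submatrix_mul_equiv, hAM, submatrix_one _ e.injective]
  have hM'A' : M' * A' = 1 := by
    rw [hA', hM', submatrix_mul_equiv, hMA, submatrix_one _ e.injective]
  haveI instM' : Invertible M' := invertibleOfLeftInverse M' A' hA'M'
  set W := M'.toBlocks₁₁ with hW
  set X := M'.toBlocks₁₂ with hX
  set Y := M'.toBlocks₂₁ with hY
  set Z := M'.toBlocks₂₂ with hZdef
  have hFB : fromBlocks W X Y Z = M' := fromBlocks_toBlocks M'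
  have hZ : Z = 1 - D := by
    rw [h1D, hZdef]
    ext i j
    simp [hM', toBlocks₂₂, he]
  haveI instZ : Invertible Z := hZ ▸ (1 - D).invertibleOfIsUnitDet hDunit
  haveI instFB : Invertible (fromBlocks W X Y Z) := hFB.symm ▸ instM'
  haveI instS : Invertible (W - X * ⅟Z * Y) := invertibleOfFromBlocks₂₂Invertible W X Y Z
  set S := W - X * ⅟Z * Y with hS
  have hinvFB : ⅟(fromBlocks W X Y Z) = A' := by
    apply invOf_eq_left_inv
    rw [hFB, hA'M']
  have hb11 : A'.toBlocks₁₁ = ⅟S := by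
    rw [← hinvFB, invOf_fromBlocks₂₂_eq W X Y Z, toBlocks_fromBlocks₁₁]
  -- determinant computations
  have hdetM' : M'.det = Z.det * S.det := by rw [← hFB, det_fromBlocks₂₂]
  have hdetM'2 : M'.det = (A.det)⁻¹ := by
    rw [hM', det_submatrix_equiv_self, hM, det_nonsing_inv, Ring.inverse_eq_inv']
  have hdetZ : Z.det = (1 - D).det := by rw [hZ]
  have hAinv : (1 - D).det * S.det = (A.det)⁻¹ := by
    rw [← hdetZ, ← hdetM', hdetM'2]
  have hSdet0 : S.det ≠ 0 := by
    intro h0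
    rw [h0, mul_zero] at hAinv
    exact hdetA0 (inv_eq_zero.mp hAinv.symm)
  have hSinv : (⅟S).det = (S.det)⁻¹ := by
    have h1 : S.det * (⅟S).det = 1 := by rw [← det_mul, mul_invOf_self, det_one]
    exact (inv_eq_of_mul_eq_one_right h1).symm
  have hSdet : S.det = ((1 - D).det)⁻¹ * (A.det)⁻¹ := by
    rw [← hAinv, ← mul_assoc, inv_mul_cancel₀ hDdet, one_mul]
  have hdetb11 : A'.toBlocks₁₁.det = (1 - D).det * A.det := by
    rw [hb11, hSinv, hSdet, mul_inv, inv_inv, inv_inv]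
  -- Step D : the sum of minors equals det of the upper-left corner of A
  have hA11 : A'.toBlocks₁₁ = 1 + C.submatrix (Fin.castAdd n) (Fin.castAdd n) := by
    ext i j
    simp [hA', toBlocks₁₁, hA, he, one_apply, (Fin.castAdd_injective m n).eq_iff]
  have hsum : (∑ Xs : Finset (Fin m),
      (C.submatrix (fun i : {x // x ∈ Xs} => Fin.castAdd n i.1)
        (fun j : {x // x ∈ Xs} => Fin.castAdd n j.1)).det) = A'.toBlocks₁₁.det := by
    rw [hA11, widom_det_one_add_eq_sum_minors]
    refine Finset.sum_congr rfl fun Xs _ => ?_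
    rw [submatrix_submatrix]
    rfl
  -- conclusion
  rw [hLHS, hsum, hdetb11]
  field_simp
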